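/- Let f be a positive mild solution of the kinetic equations on [0,T] whose weight denominators Σ_n w^(l)_n F_n(f(t)) and Σ_n w^int_n F_n(f(t)) are strictly positive for all t ∈ [0,T]. Then there exists a constant C > 0, depending only on the model parameters and not on f, such that for all t ∈ [0,T], ‖f(t)‖_{L∞} ≤ ‖f(0)‖_{L∞} · exp( C ∫₀^t Φ(τ) dτ ), where Φ(τ) = β + max_{1 ≤ l ≤ M⁻} Σ_{k=1}^M W^(l)_k(f(τ)). -/

import Mathlib

open MeasureTheory Filter

namespace GBN

structure Params (M : ℕ) where
  hM : 0 < M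
  Mm : ℕ
  M0 : ℕ
  Mp : ℕ
  hsum : Mm + M0 + Mp = M
  v : Fin M → ℝ
  hvneg : ∀ σ : Fin M, (σ : ℕ) < Mm → v σ < 0
  hvzero : ∀ σ : Fin M, Mm ≤ (σ : ℕ) → (σ : ℕ) < Mm + M0 → v σ = 0
  hvpos : ∀ σ : Fin M, Mm + M0 ≤ (σ : ℕ) → 0 < v σ
  Kb : Fin M → ℕ
  hKb : ∀ l : Fin M, (l : ℕ) < Mm → 0 < Kb l
  Jb : Fin M → Fin M → Fin M → ℕ
  hJbdiag : ∀ l σ, Jb l σ σ = 0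
  hJbrow : ∀ l : Fin M, (l : ℕ) < Mm → ∀ s : Fin M, (∑ σ : Fin M, Jb l s σ) = Kb l
  wb : Fin M → Fin M → ℝ
  hwb : ∀ l : Fin M, (l : ℕ) < Mm → ∀ σ : Fin M, 0 < wb l σ
  Kint : ℕ
  hKint : 0 < Kint
  Jint : Fin M → Fin M → ℕ
  hJintdiag : ∀ σ, Jint σ σ = 0
  hJintrow : ∀ s : Fin M, (∑ σ : Fin M, Jint s σ) = Kint
  wint : Fin M → ℝ
  hwint : ∀ σ, 0 < wint σ
  beta : ℝ
  hbeta : 0 ≤ beta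

variable {M : ℕ}

/-- The set of species that can undergo boundary events. -/
def bSet (P : Params M) : Finset (Fin M) := Finset.univ.filter fun l => (l : ℕ) < P.Mm

/-- Positivity of an element of X. -/
def Positive (f : Fin M → ℝ → ℝ) : Prop := ∀ σ : Fin M, ∀ x : ℝ, 0 ≤ x → 0 ≤ f σ x

/-- Nonvanishing of an element of X. -/
def Nonzero (f : Fin M → ℝ → ℝ) : Prop := ∃ σ : Fin M, ∃ x : ℝ, 0 ≤ x ∧ f σ x ≠ 0

/-- Membership in the Banach space X of continuous, integrable (and bounded) functions. -/
def MemX (f : Fin M → ℝ → ℝ) : Prop :=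
  (∀ σ, ContinuousOn (f σ) (Set.Ici 0)) ∧
  (∀ σ, IntegrableOn (f σ) (Set.Ici 0)) ∧
  (∀ σ, BddAbove ((fun x => |f σ x|) '' Set.Ici 0))

noncomputable def normL1 (f : Fin M → ℝ → ℝ) : ℝ :=
  ∑ σ : Fin M, ∫ x in Set.Ici (0:ℝ), |f σ x|

noncomputable def normLinf (f : Fin M → ℝ → ℝ) : ℝ :=
  ∑ σ : Fin M, sSup ((fun x => |f σ x|) '' Set.Ici 0)

/-- The norm of X. -/
noncomputable def normX (f : Fin M → ℝ → ℝ) : ℝ := normL1 f + normLinf f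

/-- Pointwise difference. -/
def subf (f g : Fin M → ℝ → ℝ) : Fin M → ℝ → ℝ := fun σ x => f σ x - g σ x

/-- The total number of particles of species σ. -/
noncomputable def Fc (f : Fin M → ℝ → ℝ) (σ : Fin M) : ℝ := ∫ x in Set.Ici (0:ℝ), f σ x

/-- The total number of particles. -/
noncomputable def Ft (f : Fin M → ℝ → ℝ) : ℝ := ∑ σ : Fin M, Fc f σ

/-- The weighted fraction W_σ for a weight vector w. -/
noncomputable def Wgt (w : Fin M → ℝ) (f : Fin M → ℝ → ℝ) (σ : Fin M) : ℝ :=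
  w σ / ∑ n : Fin M, w n * Fc f n

/-- The weighted fraction γ. -/
noncomputable def gam (P : Params M) (f : Fin M → ℝ → ℝ) : ℝ :=
  Ft f / ∑ n : Fin M, P.wint n * Fc f n

/-- The boundary flux rate L̇_l = -v_l f_l(0). -/
noncomputable def Ldot (P : Params M) (f : Fin M → ℝ → ℝ) (l : Fin M) : ℝ := -(P.v l) * f l 0

/-- The flux j(f). -/
noncomputable def flux (P : Params M) (f : Fin M → ℝ → ℝ) (σ : Fin M) (x : ℝ) : ℝ :=
  (∑ s : Fin M, ((∑ l ∈ bSet P, Ldot P f l * (P.Jb l s σ : ℝ) * Wgt (P.wb l) f s)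
      + P.beta * gam P f * (P.Jint s σ : ℝ) * P.wint s) * f s x)
  - ((∑ l ∈ bSet P, Ldot P f l * (P.Kb l : ℝ) * Wgt (P.wb l) f σ)
      + P.beta * gam P f * (P.Kint : ℝ) * P.wint σ) * f σ x

/-- Extension by zero to negative arguments. -/
noncomputable def ext (g : ℝ → ℝ) (x : ℝ) : ℝ := if 0 ≤ x then g x else 0

/-- Continuity in time of a curve with values in X, i.e. membership in C([0,T];X). -/
def ContinuousInX (T : ℝ) (u : ℝ → Fin M → ℝ → ℝ) : Prop :=
  ∀ t ∈ Set.Icc (0:ℝ) T, ∀ ε > (0:ℝ), ∃ δ > (0:ℝ), ∀ s ∈ Set.Icc (0:ℝ) T,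
    |s - t| < δ → normX (subf (u s) (u t)) < ε

/-- A mild solution of the kinetic equations on [0,T]. -/
def MildSolution (P : Params M) (T : ℝ) (u : ℝ → Fin M → ℝ → ℝ) : Prop :=
  (∀ t ∈ Set.Icc (0:ℝ) T, MemX (u t)) ∧
  ContinuousInX T u ∧
  ∀ σ : Fin M, ∀ x : ℝ, 0 ≤ x → ∀ t ∈ Set.Icc (0:ℝ) T,
    u t σ x = ext (u 0 σ) (x - P.v σ * t)
      + ∫ τ in (0:ℝ)..t, ext (flux P (u τ) σ) (x - P.v σ * (t - τ))

/-- Positivity of a curve on [0,T]. -/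
def PositiveOn (T : ℝ) (u : ℝ → Fin M → ℝ → ℝ) : Prop :=
  ∀ t ∈ Set.Icc (0:ℝ) T, Positive (u t)

/-- u is the unique maximal positive mild solution with initial datum f₀,
defined on [0, Tstar). -/
def IsMaximalSolution (P : Params M) (f₀ : Fin M → ℝ → ℝ)
    (Tstar : ENNReal) (u : ℝ → Fin M → ℝ → ℝ) : Prop :=
  0 < Tstar ∧
  (∀ σ : Fin M, ∀ x : ℝ, 0 ≤ x → u 0 σ x = f₀ σ x) ∧
  (∀ T : ℝ, 0 < T → ENNReal.ofReal T < Tstar → MildSolution P T u ∧ PositiveOn T u) ∧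
  (∀ T : ℝ, 0 < T → ∀ g : ℝ → Fin M → ℝ → ℝ,
      MildSolution P T g → PositiveOn T g → (∀ σ : Fin M, ∀ x : ℝ, 0 ≤ x → g 0 σ x = f₀ σ x) →
      ENNReal.ofReal T < Tstar ∧
        ∀ t ∈ Set.Icc (0:ℝ) T, ∀ σ : Fin M, ∀ x : ℝ, 0 ≤ x → g t σ x = u t σ x)

end GBN

namespace GBN

variable {M : ℕ}

/-! ### Auxiliary development for Lemma B.4 -/

/-- per-species sup norm -/
noncomputable def hsup (f : Fin M → ℝ → ℝ) (σ : Fin M) : ℝ :=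
  sSup ((fun x => |f σ x|) '' Set.Ici 0)

lemma normLinf_eq_sum_hsup (f : Fin M → ℝ → ℝ) : normLinf f = ∑ σ, hsup f σ := rfl

lemma abs_le_hsup {f : Fin M → ℝ → ℝ} {σ : Fin M}
    (hb : BddAbove ((fun x => |f σ x|) '' Set.Ici 0)) {x : ℝ} (hx : 0 ≤ x) :
    |f σ x| ≤ hsup f σ :=
  le_csSup hb ⟨x, hx, rfl⟩

lemma hsup_nonneg {f : Fin M → ℝ → ℝ} {σ : Fin M}
    (hb : BddAbove ((fun x => |f σ x|) '' Set.Ici 0)) : 0 ≤ hsup f σ :=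
  (abs_nonneg _).trans (abs_le_hsup hb le_rfl)

lemma hsup_le {f : Fin M → ℝ → ℝ} {σ : Fin M} {c : ℝ}
    (h : ∀ x, 0 ≤ x → |f σ x| ≤ c) : hsup f σ ≤ c :=
  csSup_le ⟨|f σ 0|, 0, Set.self_mem_Ici, rfl⟩ (by rintro y ⟨x, hx, rfl⟩; exact h x hx)

lemma bdd_sub {f g : Fin M → ℝ → ℝ} {σ : Fin M}
    (hf : BddAbove ((fun x => |f σ x|) '' Set.Ici 0))
    (hg : BddAbove ((fun x => |g σ x|) '' Set.Ici 0)) :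
    BddAbove ((fun x => |subf f g σ x|) '' Set.Ici 0) := by
  obtain ⟨a, ha⟩ := hf
  obtain ⟨b, hb⟩ := hg
  refine ⟨a + b, ?_⟩
  rintro y ⟨x, hx, rfl⟩
  have h1 : |f σ x| ≤ a := ha ⟨x, hx, rfl⟩
  have h2 : |g σ x| ≤ b := hb ⟨x, hx, rfl⟩
  have : |f σ x - g σ x| ≤ |f σ x| + |g σ x| := abs_sub _ _
  simpa [subf] using this.trans (by linarith)

/-- Bundled hypotheses about the solution. -/
structure Sol (P : Params M) (T : ℝ) (u : ℝ → Fin M → ℝ → ℝ) : Prop where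
  hT : 0 ≤ T
  memX : ∀ t ∈ Set.Icc (0:ℝ) T, MemX (u t)
  contX : ContinuousInX T u
  mild : ∀ σ : Fin M, ∀ x : ℝ, 0 ≤ x → ∀ t ∈ Set.Icc (0:ℝ) T,
    u t σ x = ext (u 0 σ) (x - P.v σ * t)
      + ∫ τ in (0:ℝ)..t, ext (flux P (u τ) σ) (x - P.v σ * (t - τ))
  pos : PositiveOn T u
  den : ∀ t ∈ Set.Icc (0:ℝ) T,
    (∀ l ∈ bSet P, 0 < ∑ n : Fin M, P.wb l n * Fc (u t) n) ∧
      0 < ∑ n : Fin M, P.wint n * Fc (u t) n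

variable {P : Params M} {T : ℝ} {u : ℝ → Fin M → ℝ → ℝ}

lemma Sol.bdd (hs : Sol P T u) {t : ℝ} (ht : t ∈ Set.Icc (0:ℝ) T) (σ : Fin M) :
    BddAbove ((fun x => |u t σ x|) '' Set.Ici 0) := (hs.memX t ht).2.2 σ

lemma Sol.bddsub (hs : Sol P T u) {a b : ℝ} (ha : a ∈ Set.Icc (0:ℝ) T)
    (hb : b ∈ Set.Icc (0:ℝ) T) (σ : Fin M) :
    BddAbove ((fun x => |subf (u a) (u b) σ x|) '' Set.Ici 0) :=
  bdd_sub (hs.bdd ha σ) (hs.bdd hb σ)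

lemma normL1_nonneg (f : Fin M → ℝ → ℝ) : 0 ≤ normL1 f :=
  Finset.sum_nonneg fun σ _ => integral_nonneg fun x => abs_nonneg _

lemma hsup_le_normX (hb : ∀ σ : Fin M, BddAbove ((fun x => |f σ x|) '' Set.Ici 0))
    (σ : Fin M) : hsup f σ ≤ normX f := by
  have h1 : hsup f σ ≤ normLinf f :=
    Finset.single_le_sum (fun τ _ => hsup_nonneg (hb τ)) (Finset.mem_univ σ)
  have h2 := normL1_nonneg f
  unfold normX
  linarith

/-- evaluation differences are controlled by normX -/
lemma Sol.eval_diff (hs : Sol P T u) {a b : ℝ} (ha : a ∈ Set.Icc (0:ℝ) T)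
    (hb : b ∈ Set.Icc (0:ℝ) T) (σ : Fin M) {x : ℝ} (hx : 0 ≤ x) :
    |u a σ x - u b σ x| ≤ normX (subf (u a) (u b)) := by
  have h1 : |subf (u a) (u b) σ x| ≤ hsup (subf (u a) (u b)) σ :=
    abs_le_hsup (hs.bddsub ha hb σ) hx
  have h2 := hsup_le_normX (f := subf (u a) (u b)) (fun τ => hs.bddsub ha hb τ) σ
  simpa [subf] using h1.trans h2

lemma Sol.hsup_diff (hs : Sol P T u) {a b : ℝ} (ha : a ∈ Set.Icc (0:ℝ) T)
    (hb : b ∈ Set.Icc (0:ℝ) T) (σ : Fin M) :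
    |hsup (u a) σ - hsup (u b) σ| ≤ normX (subf (u a) (u b)) := by
  have key : ∀ c d : ℝ, c ∈ Set.Icc (0:ℝ) T → d ∈ Set.Icc (0:ℝ) T →
      hsup (u c) σ - hsup (u d) σ ≤ normX (subf (u c) (u d)) := by
    intro c d hc hd
    have h1 : hsup (u c) σ ≤ hsup (u d) σ + normX (subf (u c) (u d)) := by
      refine hsup_le fun x hx => ?_
      have e1 : |u c σ x| ≤ |u d σ x| + |u c σ x - u d σ x| := by
        have := abs_sub_abs_le_abs_sub (u c σ x) (u d σ x); linarith [abs_nonneg (u c σ x)]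
      have e2 : |u d σ x| ≤ hsup (u d) σ := abs_le_hsup (hs.bdd hd σ) hx
      have e3 := hs.eval_diff hc hd σ hx
      linarith
    linarith
  have hsymm : normX (subf (u b) (u a)) = normX (subf (u a) (u b)) := by
    unfold normX normL1 normLinf subf
    congr 1
    · exact Finset.sum_congr rfl fun σ _ => by
        refine integral_congr_ae (Eventually.of_forall fun x => ?_)
        exact abs_sub_comm _ _
    · exact Finset.sum_congr rfl fun σ _ => by
        congr 1
        ext y
        constructor
        · rintro ⟨x, hx, rfl⟩; exact ⟨x, hx, abs_sub_comm _ _⟩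
        · rintro ⟨x, hx, rfl⟩; exact ⟨x, hx, abs_sub_comm _ _⟩
  rw [abs_le]
  constructor
  · have := key b a hb ha; rw [hsymm] at this; linarith
  · exact key a b ha hb

lemma Sol.Fc_diff (hs : Sol P T u) {a b : ℝ} (ha : a ∈ Set.Icc (0:ℝ) T)
    (hb : b ∈ Set.Icc (0:ℝ) T) (n : Fin M) :
    |Fc (u a) n - Fc (u b) n| ≤ normX (subf (u a) (u b)) := by
  have hia : IntegrableOn (u a n) (Set.Ici 0) := (hs.memX a ha).2.1 n
  have hib : IntegrableOn (u b n) (Set.Ici 0) := (hs.memX b hb).2.1 n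
  have h1 : Fc (u a) n - Fc (u b) n = ∫ x in Set.Ici (0:ℝ), (u a n x - u b n x) := by
    rw [integral_sub hia hib]; rfl
  have h2 : |∫ x in Set.Ici (0:ℝ), (u a n x - u b n x)| ≤
      ∫ x in Set.Ici (0:ℝ), |u a n x - u b n x| := by
    simpa [Real.norm_eq_abs] using
      norm_integral_le_integral_norm (μ := volume.restrict (Set.Ici 0))
        (f := fun x => u a n x - u b n x)
  have h3 : (∫ x in Set.Ici (0:ℝ), |u a n x - u b n x|) ≤ normL1 (subf (u a) (u b)) := by
    unfold normL1 subf
    exact Finset.single_le_sum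
      (f := fun σ => ∫ x in Set.Ici (0:ℝ), |u a σ x - u b σ x|)
      (fun τ _ => integral_nonneg fun x => abs_nonneg _) (Finset.mem_univ n)
  have h4 : 0 ≤ normLinf (subf (u a) (u b)) :=
    Finset.sum_nonneg fun τ _ => hsup_nonneg (hs.bddsub ha hb τ)
  rw [h1]
  unfold normX
  linarith

end GBN

namespace GBN

variable {M : ℕ} {P : Params M} {T : ℝ} {u : ℝ → Fin M → ℝ → ℝ}

/-! ### Continuity in time -/

lemma Sol.contOn_eval (hs : Sol P T u) (n : Fin M) {p : ℝ → ℝ} (hp : Continuous p) :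
    ContinuousOn (fun r => u r n (p r)) (Set.Icc 0 T ∩ p ⁻¹' Set.Ici 0) := by
  intro r₀ hr₀
  rw [Metric.continuousWithinAt_iff]
  intro ε hε
  have hc : ContinuousWithinAt (u r₀ n) (Set.Ici 0) (p r₀) :=
    (hs.memX r₀ hr₀.1).1 n (p r₀) hr₀.2
  rw [Metric.continuousWithinAt_iff] at hc
  obtain ⟨δ₁, hδ₁, h1⟩ := hc (ε/2) (by linarith)
  obtain ⟨δ₂, hδ₂, h2⟩ := hs.contX r₀ hr₀.1 (ε/2) (by linarith)
  have hpc : ContinuousAt p r₀ := hp.continuousAt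
  rw [Metric.continuousAt_iff] at hpc
  obtain ⟨δ₃, hδ₃, h3⟩ := hpc δ₁ hδ₁
  refine ⟨min δ₂ δ₃, by positivity, ?_⟩
  intro r hr hrd
  have hd2 : |r - r₀| < δ₂ := by
    rw [← Real.dist_eq]; exact lt_of_lt_of_le hrd (min_le_left _ _)
  have hd3 : dist (p r) (p r₀) < δ₁ := h3 (lt_of_lt_of_le hrd (min_le_right _ _))
  have key1 : |u r n (p r) - u r₀ n (p r)| ≤ normX (subf (u r) (u r₀)) :=
    hs.eval_diff hr.1 hr₀.1 n hr.2
  have key1' : |u r n (p r) - u r₀ n (p r)| < ε/2 :=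
    lt_of_le_of_lt key1 (h2 r hr.1 hd2)
  have key2 : dist (u r₀ n (p r)) (u r₀ n (p r₀)) < ε/2 := h1 hr.2 hd3
  have : dist (u r n (p r)) (u r₀ n (p r₀)) ≤
      dist (u r n (p r)) (u r₀ n (p r)) + dist (u r₀ n (p r)) (u r₀ n (p r₀)) :=
    dist_triangle _ _ _
  rw [Real.dist_eq] at this ⊢
  rw [Real.dist_eq] at key2
  calc |u r n (p r) - u r₀ n (p r₀)| ≤ _ + _ := this
    _ < ε/2 + ε/2 := by rw [Real.dist_eq]; exact add_lt_add key1' key2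
    _ = ε := by ring

lemma Sol.contOn_eval0 (hs : Sol P T u) (n : Fin M) :
    ContinuousOn (fun r => u r n 0) (Set.Icc 0 T) := by
  have := hs.contOn_eval n (p := fun _ => (0:ℝ)) continuous_const
  simpa [Set.preimage_const_of_mem Set.self_mem_Ici] using this

lemma Sol.contOn_hsup (hs : Sol P T u) (σ : Fin M) :
    ContinuousOn (fun r => hsup (u r) σ) (Set.Icc 0 T) := by
  intro r₀ hr₀
  rw [Metric.continuousWithinAt_iff]
  intro ε hε
  obtain ⟨δ, hδ, h⟩ := hs.contX r₀ hr₀ ε hε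
  refine ⟨δ, hδ, fun r hr hrd => ?_⟩
  rw [Real.dist_eq] at hrd ⊢
  exact lt_of_le_of_lt (hs.hsup_diff hr hr₀ σ) (h r hr hrd)

lemma Sol.contOn_Fc (hs : Sol P T u) (n : Fin M) :
    ContinuousOn (fun r => Fc (u r) n) (Set.Icc 0 T) := by
  intro r₀ hr₀
  rw [Metric.continuousWithinAt_iff]
  intro ε hε
  obtain ⟨δ, hδ, h⟩ := hs.contX r₀ hr₀ ε hε
  refine ⟨δ, hδ, fun r hr hrd => ?_⟩
  rw [Real.dist_eq] at hrd ⊢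
  exact lt_of_le_of_lt (hs.Fc_diff hr hr₀ n) (h r hr hrd)

/-! ### Coefficients -/

/-- loss coefficient -/
noncomputable def lam (P : Params M) (f : Fin M → ℝ → ℝ) (σ : Fin M) : ℝ :=
  (∑ l ∈ bSet P, Ldot P f l * (P.Kb l : ℝ) * Wgt (P.wb l) f σ)
    + P.beta * gam P f * (P.Kint : ℝ) * P.wint σ

/-- gain coefficient -/
noncomputable def Aco (P : Params M) (f : Fin M → ℝ → ℝ) (s σ : Fin M) : ℝ :=
  (∑ l ∈ bSet P, Ldot P f l * (P.Jb l s σ : ℝ) * Wgt (P.wb l) f s)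
    + P.beta * gam P f * (P.Jint s σ : ℝ) * P.wint s

lemma flux_eq (P : Params M) (f : Fin M → ℝ → ℝ) (σ : Fin M) (x : ℝ) :
    flux P f σ x = (∑ n, Aco P f n σ * f n x) - lam P f σ * f σ x := rfl

lemma colsum (P : Params M) (f : Fin M → ℝ → ℝ) (s : Fin M) :
    ∑ σ, Aco P f s σ = lam P f s := by
  unfold Aco lam
  rw [Finset.sum_add_distrib]
  congr 1
  · rw [Finset.sum_comm]
    refine Finset.sum_congr rfl fun l hl => ?_
    have hlm : (l : ℕ) < P.Mm := by
      have := Finset.mem_filter.mp hl; exact this.2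
    have hK : (∑ σ, (P.Jb l s σ : ℝ)) = (P.Kb l : ℝ) := by
      rw [← Nat.cast_sum]; exact_mod_cast P.hJbrow l hlm s
    calc ∑ σ, Ldot P f l * (P.Jb l s σ : ℝ) * Wgt (P.wb l) f s
        = (Ldot P f l * Wgt (P.wb l) f s) * ∑ σ, (P.Jb l s σ : ℝ) := by
          rw [Finset.mul_sum]; exact Finset.sum_congr rfl fun σ _ => by ring
      _ = Ldot P f l * (P.Kb l : ℝ) * Wgt (P.wb l) f s := by rw [hK]; ring
  · have hK : (∑ σ, (P.Jint s σ : ℝ)) = (P.Kint : ℝ) := by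
      rw [← Nat.cast_sum]; exact_mod_cast P.hJintrow s
    calc ∑ σ, P.beta * gam P f * (P.Jint s σ : ℝ) * P.wint s
        = (P.beta * gam P f * P.wint s) * ∑ σ, (P.Jint s σ : ℝ) := by
          rw [Finset.mul_sum]; exact Finset.sum_congr rfl fun σ _ => by ring
      _ = P.beta * gam P f * (P.Kint : ℝ) * P.wint s := by rw [hK]; ring

end GBN

namespace GBN

variable {M : ℕ} {P : Params M} {T : ℝ} {u : ℝ → Fin M → ℝ → ℝ}

/-! ### Nonnegativity of coefficients -/

lemma Sol.Fc_nonneg (hs : Sol P T u) {t : ℝ} (ht : t ∈ Set.Icc (0:ℝ) T) (n : Fin M) :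
    0 ≤ Fc (u t) n :=
  setIntegral_nonneg measurableSet_Ici fun x hx => hs.pos t ht n x hx

lemma Sol.Ldot_nonneg (hs : Sol P T u) {t : ℝ} (ht : t ∈ Set.Icc (0:ℝ) T)
    {l : Fin M} (hl : l ∈ bSet P) : 0 ≤ Ldot P (u t) l := by
  have hv : P.v l < 0 := P.hvneg l (Finset.mem_filter.mp hl).2
  have h0 := hs.pos t ht l 0 le_rfl
  unfold Ldot; nlinarith

lemma Sol.Wgt_nonneg (hs : Sol P T u) {t : ℝ} (ht : t ∈ Set.Icc (0:ℝ) T)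
    {l : Fin M} (hl : l ∈ bSet P) (σ : Fin M) : 0 ≤ Wgt (P.wb l) (u t) σ :=
  div_nonneg (le_of_lt (P.hwb l (Finset.mem_filter.mp hl).2 σ))
    (le_of_lt ((hs.den t ht).1 l hl))

lemma Sol.gam_nonneg (hs : Sol P T u) {t : ℝ} (ht : t ∈ Set.Icc (0:ℝ) T) :
    0 ≤ gam P (u t) :=
  div_nonneg (Finset.sum_nonneg fun n _ => hs.Fc_nonneg ht n) (le_of_lt (hs.den t ht).2)

lemma Sol.Aco_nonneg (hs : Sol P T u) {t : ℝ} (ht : t ∈ Set.Icc (0:ℝ) T)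
    (s σ : Fin M) : 0 ≤ Aco P (u t) s σ := by
  unfold Aco
  refine add_nonneg (Finset.sum_nonneg fun l hl => ?_) ?_
  · exact mul_nonneg (mul_nonneg (hs.Ldot_nonneg ht hl) (Nat.cast_nonneg _))
      (hs.Wgt_nonneg ht hl s)
  · exact mul_nonneg (mul_nonneg (mul_nonneg P.hbeta (hs.gam_nonneg ht))
      (Nat.cast_nonneg _)) (le_of_lt (P.hwint s))

lemma Sol.lam_nonneg (hs : Sol P T u) {t : ℝ} (ht : t ∈ Set.Icc (0:ℝ) T)
    (σ : Fin M) : 0 ≤ lam P (u t) σ := by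
  rw [← colsum]
  exact Finset.sum_nonneg fun τ _ => hs.Aco_nonneg ht σ τ

lemma Sol.eval_le_hsup (hs : Sol P T u) {t : ℝ} (ht : t ∈ Set.Icc (0:ℝ) T)
    (σ : Fin M) {x : ℝ} (hx : 0 ≤ x) : u t σ x ≤ hsup (u t) σ :=
  (le_abs_self _).trans (abs_le_hsup (hs.bdd ht σ) hx)

/-! ### Continuity of coefficients -/

lemma Sol.contOn_Ldot (hs : Sol P T u) (l : Fin M) :
    ContinuousOn (fun r => Ldot P (u r) l) (Set.Icc 0 T) := by
  have : ContinuousOn (fun r => -P.v l * u r l 0) (Set.Icc 0 T) :=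
    continuousOn_const.mul (hs.contOn_eval0 l)
  simpa [Ldot] using this

lemma Sol.contOn_Wgt (hs : Sol P T u) {l : Fin M} (hl : l ∈ bSet P) (σ : Fin M) :
    ContinuousOn (fun r => Wgt (P.wb l) (u r) σ) (Set.Icc 0 T) := by
  have : ContinuousOn (fun r => P.wb l σ / ∑ n, P.wb l n * Fc (u r) n) (Set.Icc 0 T) := by
    refine ContinuousOn.div continuousOn_const ?_ ?_
    · exact continuousOn_finset_sum _ fun n _ => continuousOn_const.mul (hs.contOn_Fc n)
    · exact fun r hr => ne_of_gt ((hs.den r hr).1 l hl)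
  simpa [Wgt] using this

lemma Sol.contOn_gam (hs : Sol P T u) :
    ContinuousOn (fun r => gam P (u r)) (Set.Icc 0 T) := by
  have : ContinuousOn (fun r => (∑ n, Fc (u r) n) / ∑ n, P.wint n * Fc (u r) n)
      (Set.Icc 0 T) := by
    refine ContinuousOn.div ?_ ?_ ?_
    · exact continuousOn_finset_sum _ fun n _ => hs.contOn_Fc n
    · exact continuousOn_finset_sum _ fun n _ => continuousOn_const.mul (hs.contOn_Fc n)
    · exact fun r hr => ne_of_gt (hs.den r hr).2
  simpa [gam, Ft] using this

lemma Sol.contOn_lam (hs : Sol P T u) (σ : Fin M) :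
    ContinuousOn (fun r => lam P (u r) σ) (Set.Icc 0 T) := by
  unfold lam
  refine ContinuousOn.add ?_ ?_
  · exact continuousOn_finset_sum _ fun l hl =>
      ((hs.contOn_Ldot l).mul continuousOn_const).mul (hs.contOn_Wgt hl σ)
  · exact ((continuousOn_const.mul (hs.contOn_gam)).mul continuousOn_const).mul
      continuousOn_const

lemma Sol.contOn_Aco (hs : Sol P T u) (s σ : Fin M) :
    ContinuousOn (fun r => Aco P (u r) s σ) (Set.Icc 0 T) := by
  unfold Aco
  refine ContinuousOn.add ?_ ?_
  · exact continuousOn_finset_sum _ fun l hl =>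
      ((hs.contOn_Ldot l).mul continuousOn_const).mul (hs.contOn_Wgt hl s)
  · exact ((continuousOn_const.mul (hs.contOn_gam)).mul continuousOn_const).mul
      continuousOn_const

/-- gain bound function -/
noncomputable def gbar (P : Params M) (u : ℝ → Fin M → ℝ → ℝ) (σ : Fin M) (r : ℝ) : ℝ :=
  ∑ n, Aco P (u r) n σ * hsup (u r) n

lemma Sol.contOn_gbar (hs : Sol P T u) (σ : Fin M) :
    ContinuousOn (gbar P u σ) (Set.Icc 0 T) :=
  continuousOn_finset_sum _ fun n _ => (hs.contOn_Aco n σ).mul (hs.contOn_hsup n)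

lemma Sol.gbar_nonneg (hs : Sol P T u) {t : ℝ} (ht : t ∈ Set.Icc (0:ℝ) T) (σ : Fin M) :
    0 ≤ gbar P u σ t :=
  Finset.sum_nonneg fun n _ => mul_nonneg (hs.Aco_nonneg ht n σ) (hsup_nonneg (hs.bdd ht n))

end GBN

namespace GBN

variable {M : ℕ} {P : Params M} {T : ℝ} {u : ℝ → Fin M → ℝ → ℝ}

lemma Sol.lam_intInt (hs : Sol P T u) (σ : Fin M) {c d : ℝ} (hc : c ∈ Set.Icc (0:ℝ) T)
    (hd : d ∈ Set.Icc (0:ℝ) T) :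
    IntervalIntegrable (fun r => lam P (u r) σ) volume c d := by
  apply ContinuousOn.intervalIntegrable
  exact (hs.contOn_lam σ).mono (Set.uIcc_subset_Icc hc hd)

lemma Sol.boundary_zero (hs : Sol P T u) {σ : Fin M} (hv : 0 < P.v σ) {a : ℝ}
    (ha0 : 0 < a) (haT : a ≤ T) : u a σ 0 = 0 := by
  rw [hs.mild σ 0 le_rfl a ⟨le_of_lt ha0, haT⟩]
  have h1 : ext (u 0 σ) (0 - P.v σ * a) = 0 := by
    unfold ext; rw [if_neg]; nlinarith
  have hae : ∀ᵐ (τ : ℝ), τ ≠ a := by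
    rw [MeasureTheory.ae_iff]
    have h : {τ : ℝ | ¬ τ ≠ a} = {a} := by ext τ; simp
    rw [h]; exact measure_singleton a
  have h2 : (∫ τ in (0:ℝ)..a, ext (flux P (u τ) σ) (0 - P.v σ * (a - τ)))
      = ∫ τ in (0:ℝ)..a, (0:ℝ) := by
    apply intervalIntegral.integral_congr_ae
    refine hae.mono fun τ hτ hmem => ?_
    rw [Set.uIoc_of_le (le_of_lt ha0)] at hmem
    have hlt : τ < a := lt_of_le_of_ne hmem.2 hτ
    unfold ext; rw [if_neg]; nlinarith
  rw [h1, h2, intervalIntegral.integral_zero]; ring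

/-- Core Duhamel estimate along a characteristic starting at time `a`. -/
lemma Sol.duhamel_core (hs : Sol P T u) (σ : Fin M) {s t a x : ℝ} (h0s : 0 ≤ s)
    (hsa : s ≤ a) (hat : a ≤ t) (htT : t ≤ T) (hx : 0 ≤ x)
    (hPa : ∀ r, a ≤ r → r ≤ t → 0 ≤ x - P.v σ * (t - r))
    (hPo : ∀ r, a < r → r < t → 0 < x - P.v σ * (t - r) ∨ P.v σ = 0) :
    u t σ x ≤ Real.exp (-∫ r in a..t, lam P (u r) σ) * u a σ (x - P.v σ * (t - a))
      + ∫ r in a..t, Real.exp (-∫ q in r..t, lam P (u q) σ) * gbar P u σ r := by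
  have h0a : 0 ≤ a := h0s.trans hsa
  have h0t : 0 ≤ t := h0a.trans hat
  have haIcc : a ∈ Set.Icc (0:ℝ) T := ⟨h0a, hat.trans htT⟩
  have htIcc : t ∈ Set.Icc (0:ℝ) T := ⟨h0t, htT⟩
  set v := P.v σ with hv
  set Pos : ℝ → ℝ := fun r => x - v * (t - r) with hPos
  have hPosc : Continuous Pos := by
    apply Continuous.sub continuous_const
    exact Continuous.mul continuous_const (Continuous.sub continuous_const continuous_id)
  have hPost : Pos t = x := by simp [hPos]
  set ψ : ℝ → ℝ := fun r => ext (flux P (u r) σ) (Pos r) with hψdef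
  set lamσ : ℝ → ℝ := fun r => lam P (u r) σ with hlamσ
  set Ψ : ℝ → ℝ := fun r => ext (u 0 σ) (x - v * t) + ∫ q in (0:ℝ)..r, ψ q with hΨdef
  -- mild solution along the characteristic
  have hmild' : ∀ τ, τ ∈ Set.Icc 0 t → 0 ≤ Pos τ → u τ σ (Pos τ) = Ψ τ := by
    intro τ hτ hPτ
    have hm := hs.mild σ (Pos τ) hPτ τ ⟨hτ.1, hτ.2.trans htT⟩
    rw [hm, hΨdef]
    congr 1
    · congr 1; simp only [hPos]; ring
    · apply intervalIntegral.integral_congr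
      intro q _
      simp only [hψdef, hPos]
      congr 1; ring
  -- the good set of times
  set S' : Set ℝ := Set.Icc 0 T ∩ Pos ⁻¹' (Set.Ici 0) with hS'def
  have hIccS' : Set.Icc a t ⊆ S' := by
    intro r hr
    exact ⟨⟨h0a.trans hr.1, hr.2.trans htT⟩, Set.mem_preimage.mpr (hPa r hr.1 hr.2)⟩
  have contOn_uPos : ∀ n, ContinuousOn (fun r => u r n (Pos r)) S' :=
    fun n => hs.contOn_eval n hPosc
  set g0 : ℝ → ℝ := fun r => ∑ n, Aco P (u r) n σ * u r n (Pos r) with hg0def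
  have contOn_g0 : ContinuousOn g0 S' :=
    continuousOn_finset_sum _ fun n _ =>
      ((hs.contOn_Aco n σ).mono Set.inter_subset_left).mul (contOn_uPos n)
  set Fl : ℝ → ℝ := fun r => flux P (u r) σ (Pos r) with hFldef
  have hFl_eq : ∀ r, Fl r = g0 r - lamσ r * u r σ (Pos r) := fun r => flux_eq P (u r) σ (Pos r)
  have contOn_Fl : ContinuousOn Fl S' := by
    have : ContinuousOn (fun r => g0 r - lamσ r * u r σ (Pos r)) S' :=
      contOn_g0.sub (((hs.contOn_lam σ).mono Set.inter_subset_left).mul (contOn_uPos σ))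
    exact this.congr fun r _ => hFl_eq r
  have hScl : IsClosed {r : ℝ | 0 ≤ Pos r} := isClosed_le continuous_const hPosc
  have hSmeas : MeasurableSet {r : ℝ | 0 ≤ Pos r} := hScl.measurableSet
  have ψ_eq_ind : ψ = Set.indicator {r : ℝ | 0 ≤ Pos r} Fl := by
    funext r
    rw [Set.indicator_apply]
    simp only [hψdef, hFldef, ext, Set.mem_setOf_eq]
  -- integrability of ψ
  have hψint : IntervalIntegrable ψ volume 0 t := by
    rw [intervalIntegrable_iff_integrableOn_Ioc_of_le h0t, ψ_eq_ind]
    have hK : IsCompact (Set.Icc 0 t ∩ {r : ℝ | 0 ≤ Pos r}) :=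
      isCompact_Icc.inter_right hScl
    have hsubS' : Set.Icc 0 t ∩ {r : ℝ | 0 ≤ Pos r} ⊆ S' := by
      intro r hr
      exact ⟨⟨hr.1.1, hr.1.2.trans htT⟩, hr.2⟩
    have hIK : IntegrableOn Fl (Set.Icc 0 t ∩ {r : ℝ | 0 ≤ Pos r}) :=
      (contOn_Fl.mono hsubS').integrableOn_compact hK
    rw [MeasureTheory.IntegrableOn, integrable_indicator_iff hSmeas,
      MeasureTheory.IntegrableOn, Measure.restrict_restrict hSmeas]
    exact hIK.mono_set fun r hr => ⟨Set.Ioc_subset_Icc_self hr.2, hr.1⟩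
  have hψint' : ∀ r, 0 ≤ r → r ≤ t → IntervalIntegrable ψ volume 0 r := by
    intro r h1 h2
    refine hψint.mono_set ?_
    rw [Set.uIcc_of_le h1, Set.uIcc_of_le h0t]
    exact Set.Icc_subset_Icc le_rfl h2
  -- continuity of Ψ
  have hΨint : IntegrableOn ψ (Set.uIcc 0 t) := (intervalIntegrable_iff').mp hψint
  have contOn_Ψ : ContinuousOn Ψ (Set.Icc 0 t) := by
    have h1 := intervalIntegral.continuousOn_primitive_interval hΨint
    rw [Set.uIcc_of_le h0t] at h1
    exact continuousOn_const.add h1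
  -- the integrating factor
  set E : ℝ → ℝ := fun r => Real.exp (∫ q in a..r, lamσ q) with hEdef
  have hEpos : ∀ r, 0 < E r := fun r => Real.exp_pos _
  have contOn_prim : ContinuousOn (fun r => ∫ q in a..r, lamσ q) (Set.Icc a t) := by
    have hi : IntegrableOn lamσ (Set.uIcc a t) :=
      (intervalIntegrable_iff').mp (hs.lam_intInt σ haIcc htIcc)
    have h1 := intervalIntegral.continuousOn_primitive_interval hi
    rwa [Set.uIcc_of_le hat] at h1
  have contOn_E : ContinuousOn E (Set.Icc a t) :=
    Real.continuous_exp.comp_continuousOn contOn_prim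
  have hrIcc : ∀ r, a ≤ r → r ≤ t → r ∈ Set.Icc (0:ℝ) T :=
    fun r h1 h2 => ⟨h0a.trans h1, h2.trans htT⟩
  -- derivative of E
  have hE' : ∀ r ∈ Set.Ioo a t, HasDerivAt E (lamσ r * E r) r := by
    intro r hr
    have hrO : r ∈ Set.Ioo (0:ℝ) T := ⟨lt_of_le_of_lt h0a hr.1, lt_of_lt_of_le hr.2 htT⟩
    have hcont : ContinuousOn lamσ (Set.Ioo (0:ℝ) T) :=
      (hs.contOn_lam σ).mono Set.Ioo_subset_Icc_self
    have smaf := hcont.stronglyMeasurableAtFilter (μ := volume) isOpen_Ioo r hrO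
    have hca : ContinuousAt lamσ r := hcont.continuousAt (isOpen_Ioo.mem_nhds hrO)
    have hint : IntervalIntegrable lamσ volume a r :=
      hs.lam_intInt σ haIcc (hrIcc r hr.1.le hr.2.le)
    have h1 := intervalIntegral.integral_hasDerivAt_right hint smaf hca
    have h2 := h1.exp
    simpa [hEdef, mul_comm] using h2
  -- derivative of Ψ
  have hΨ' : ∀ r ∈ Set.Ioo a t, HasDerivAt Ψ (ψ r) r := by
    intro r hr
    obtain ⟨O, hO, hrO, hOS'⟩ : ∃ O : Set ℝ, IsOpen O ∧ r ∈ O ∧ O ⊆ S' := by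
      rcases eq_or_ne v 0 with hv0 | hv0
      · refine ⟨Set.Ioo a t, isOpen_Ioo, hr, ?_⟩
        intro q hq
        exact hIccS' (Set.Ioo_subset_Icc_self hq)
      · refine ⟨Set.Ioo a t ∩ Pos ⁻¹' (Set.Ioi 0), isOpen_Ioo.inter
          (isOpen_Ioi.preimage hPosc), ⟨hr, ?_⟩, ?_⟩
        · rcases hPo r hr.1 hr.2 with h | h
          · exact Set.mem_preimage.mpr h
          · exact absurd h hv0
        · intro q hq
          refine ⟨⟨h0a.trans (Set.Ioo_subset_Icc_self hq.1).1,
            (Set.Ioo_subset_Icc_self hq.1).2.trans htT⟩, ?_⟩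
          exact Set.mem_preimage.mpr (Set.mem_Ici.mpr (le_of_lt hq.2))
    have hψO : ContinuousOn ψ O := by
      refine (contOn_Fl.mono hOS').congr fun q hq => ?_
      have hq0 : 0 ≤ Pos q := (hOS' hq).2
      simp only [hψdef, ext, if_pos hq0, hFldef]
    have hca : ContinuousAt ψ r := hψO.continuousAt (hO.mem_nhds hrO)
    have smaf := hψO.stronglyMeasurableAtFilter (μ := volume) hO r hrO
    have hint : IntervalIntegrable ψ volume 0 r :=
      hψint' r (h0a.trans hr.1.le) hr.2.le
    have h1 := intervalIntegral.integral_hasDerivAt_right hint smaf hca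
    exact h1.const_add _
  -- derivative of E * Ψ
  have hΦ' : ∀ r ∈ Set.Ioo a t, HasDerivWithinAt (fun w => E w * Ψ w) (E r * g0 r)
      (Set.Ioi r) r := by
    intro r hr
    have h1 := (hE' r hr).mul (hΨ' r hr)
    have hur : u r σ (Pos r) = Ψ r :=
      hmild' r ⟨h0a.trans hr.1.le, hr.2.le⟩ (hPa r hr.1.le hr.2.le)
    have hψr : ψ r = g0 r - lamσ r * Ψ r := by
      have h2 : ψ r = Fl r := by
        simp only [hψdef, ext, if_pos (hPa r hr.1.le hr.2.le), hFldef]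
        exact if_pos (show 0 ≤ Pos r from hPa r hr.1.le hr.2.le)
      rw [h2, hFl_eq r, hur]
    have heq : lamσ r * E r * Ψ r + E r * ψ r = E r * g0 r := by rw [hψr]; ring
    rw [heq] at h1
    exact h1.hasDerivWithinAt
  -- FTC
  have contOn_ΦI : ContinuousOn (fun w => E w * Ψ w) (Set.Icc a t) :=
    contOn_E.mul (contOn_Ψ.mono (Set.Icc_subset_Icc h0a le_rfl))
  have hEg0int : IntervalIntegrable (fun r => E r * g0 r) volume a t := by
    apply ContinuousOn.intervalIntegrable
    rw [Set.uIcc_of_le hat]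
    exact contOn_E.mul (contOn_g0.mono hIccS')
  have hftc := intervalIntegral.integral_eq_sub_of_hasDeriv_right_of_le hat contOn_ΦI hΦ'
    hEg0int
  -- compare g0 with gbar
  have hEgbint : IntervalIntegrable (fun r => E r * gbar P u σ r) volume a t := by
    apply ContinuousOn.intervalIntegrable
    rw [Set.uIcc_of_le hat]
    exact contOn_E.mul ((hs.contOn_gbar σ).mono fun r hr => (hIccS' hr).1)
  have hmono : (∫ r in a..t, E r * g0 r) ≤ ∫ r in a..t, E r * gbar P u σ r := by
    apply intervalIntegral.integral_mono_on hat hEg0int hEgbint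
    intro r hr
    have hrT : r ∈ Set.Icc (0:ℝ) T := hrIcc r hr.1 hr.2
    have hg0 : g0 r ≤ gbar P u σ r := by
      apply Finset.sum_le_sum
      intro n _
      exact mul_le_mul_of_nonneg_left
        (hs.eval_le_hsup hrT n (hPa r hr.1 hr.2)) (hs.Aco_nonneg hrT n σ)
    exact mul_le_mul_of_nonneg_left hg0 (le_of_lt (hEpos r))
  -- collect
  have hEa : E a = 1 := by simp [hEdef]
  have hΨt : Ψ t = u t σ x := by
    have := hmild' t ⟨h0t, le_rfl⟩ (by rw [hPost]; exact hx)
    rw [hPost] at this; exact this.symm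
  have hΨa : Ψ a = u a σ (Pos a) := (hmild' a ⟨h0a, hat⟩ (hPa a le_rfl hat)).symm
  have hkey : E t * u t σ x ≤ u a σ (Pos a) + ∫ r in a..t, E r * gbar P u σ r := by
    have : E t * Ψ t - E a * Ψ a ≤ ∫ r in a..t, E r * gbar P u σ r := by
      rw [← hftc]; exact hmono
    rw [hΨt, hEa, hΨa] at this; linarith
  -- divide by E t
  have hEt : E t = Real.exp (∫ q in a..t, lamσ q) := rfl
  have hdiv : u t σ x ≤ (E t)⁻¹ * (u a σ (Pos a) + ∫ r in a..t, E r * gbar P u σ r) := by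
    calc u t σ x = (E t)⁻¹ * (E t * u t σ x) := by
          rw [← mul_assoc, inv_mul_cancel₀ (ne_of_gt (hEpos t)), one_mul]
      _ ≤ (E t)⁻¹ * (u a σ (Pos a) + ∫ r in a..t, E r * gbar P u σ r) := by
          apply mul_le_mul_of_nonneg_left hkey
          exact inv_nonneg.mpr (le_of_lt (hEpos t))
  -- rewrite the right-hand side
  have hconv : (E t)⁻¹ * (∫ r in a..t, E r * gbar P u σ r)
      = ∫ r in a..t, Real.exp (-∫ q in r..t, lamσ q) * gbar P u σ r := by
    rw [← intervalIntegral.integral_const_mul]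
    apply intervalIntegral.integral_congr
    intro r hr
    rw [Set.uIcc_of_le hat] at hr
    have hadd : (∫ q in a..r, lamσ q) + ∫ q in r..t, lamσ q = ∫ q in a..t, lamσ q :=
      intervalIntegral.integral_add_adjacent_intervals
        (hs.lam_intInt σ haIcc (hrIcc r hr.1 hr.2))
        (hs.lam_intInt σ (hrIcc r hr.1 hr.2) htIcc)
    have hexp : (E t)⁻¹ * E r = Real.exp (-∫ q in r..t, lamσ q) := by
      rw [hEdef]
      simp only
      rw [← Real.exp_neg, ← Real.exp_add]
      congr 1; linarith
    calc (E t)⁻¹ * (E r * gbar P u σ r) = ((E t)⁻¹ * E r) * gbar P u σ r := by ring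
      _ = Real.exp (-∫ q in r..t, lamσ q) * gbar P u σ r := by rw [hexp]
  have hEtinv : (E t)⁻¹ = Real.exp (-∫ q in a..t, lamσ q) := by
    rw [hEt, ← Real.exp_neg]
  rw [mul_add] at hdiv
  rw [hconv, hEtinv] at hdiv
  exact hdiv

end GBN

namespace GBN

variable {M : ℕ} {P : Params M} {T : ℝ} {u : ℝ → Fin M → ℝ → ℝ}

lemma Sol.tail_contOn (hs : Sol P T u) (σ : Fin M) {s t : ℝ} (h0s : 0 ≤ s) (hst : s ≤ t)
    (htT : t ≤ T) :
    ContinuousOn (fun r => ∫ q in r..t, lam P (u q) σ) (Set.Icc s t) := by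
  have hsIcc : s ∈ Set.Icc (0:ℝ) T := ⟨h0s, hst.trans htT⟩
  have htIcc : t ∈ Set.Icc (0:ℝ) T := ⟨h0s.trans hst, htT⟩
  have hi : IntegrableOn (fun q => lam P (u q) σ) (Set.uIcc s t) :=
    (intervalIntegrable_iff').mp (hs.lam_intInt σ hsIcc htIcc)
  have h1 := intervalIntegral.continuousOn_primitive_interval hi
  rw [Set.uIcc_of_le hst] at h1
  have h2 : ContinuousOn (fun r => (∫ q in s..t, lam P (u q) σ)
      - ∫ q in s..r, lam P (u q) σ) (Set.Icc s t) := continuousOn_const.sub h1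
  refine h2.congr fun r hr => ?_
  have hrIcc : r ∈ Set.Icc (0:ℝ) T := ⟨h0s.trans hr.1, hr.2.trans htT⟩
  have hadd := intervalIntegral.integral_add_adjacent_intervals
    (hs.lam_intInt σ hsIcc hrIcc) (hs.lam_intInt σ hrIcc htIcc)
  linarith

lemma Sol.duhamel (hs : Sol P T u) (σ : Fin M) {s t : ℝ} (h0s : 0 ≤ s) (hst : s ≤ t)
    (htT : t ≤ T) {x : ℝ} (hx : 0 ≤ x) :
    u t σ x ≤ Real.exp (-∫ r in s..t, lam P (u r) σ) * hsup (u s) σ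
      + ∫ r in s..t, Real.exp (-∫ q in r..t, lam P (u q) σ) * gbar P u σ r := by
  have h0t : 0 ≤ t := h0s.trans hst
  have hsIcc : s ∈ Set.Icc (0:ℝ) T := ⟨h0s, hst.trans htT⟩
  have htIcc : t ∈ Set.Icc (0:ℝ) T := ⟨h0t, htT⟩
  set v := P.v σ with hv
  rcases le_or_gt 0 (x - v * (t - s)) with hcase | hcase
  · -- Case A : the characteristic starts inside at time s
    have hPa : ∀ r, s ≤ r → r ≤ t → 0 ≤ x - v * (t - r) := by
      intro r h1 h2
      rcases le_or_gt 0 v with hv0 | hv0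
      · nlinarith
      · nlinarith
    have hPo : ∀ r, s < r → r < t → 0 < x - v * (t - r) ∨ v = 0 := by
      intro r h1 h2
      rcases lt_trichotomy v 0 with hv0 | hv0 | hv0
      · left; nlinarith
      · right; exact hv0
      · left; nlinarith
    have hcore := hs.duhamel_core σ h0s le_rfl hst htT hx hPa hPo
    have hle : u s σ (x - v * (t - s)) ≤ hsup (u s) σ := hs.eval_le_hsup hsIcc σ hcase
    have hexp : (0:ℝ) ≤ Real.exp (-∫ r in s..t, lam P (u r) σ) := le_of_lt (Real.exp_pos _)
    calc u t σ x ≤ _ := hcore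
      _ ≤ _ := by
          gcongr
  · -- Case B : the characteristic enters through the boundary
    have hvpos : 0 < v := by
      rcases le_or_gt v 0 with hv0 | hv0
      · exfalso; nlinarith
      · exact hv0
    have hts : s < t := by
      rcases eq_or_lt_of_le hst with h | h
      · exfalso; rw [← h] at hcase; simp at hcase; linarith
      · exact h
    set a := t - x / v with ha
    have hxv : 0 ≤ x / v := div_nonneg hx (le_of_lt hvpos)
    have hat : a ≤ t := by simp [ha]; linarith
    have hsa : s < a := by
      rw [ha, lt_sub_iff_add_lt, ← lt_sub_iff_add_lt']
      rw [div_lt_iff₀ hvpos]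
      nlinarith
    have hPosa : x - v * (t - a) = 0 := by
      rw [ha]
      field_simp
      ring
    have hPa : ∀ r, a ≤ r → r ≤ t → 0 ≤ x - v * (t - r) := by
      intro r h1 h2
      have : x - v * (t - r) = (x - v * (t - a)) + v * (r - a) := by ring
      rw [this, hPosa]
      nlinarith
    have hPo : ∀ r, a < r → r < t → 0 < x - v * (t - r) ∨ v = 0 := by
      intro r h1 h2
      left
      have : x - v * (t - r) = (x - v * (t - a)) + v * (r - a) := by ring
      rw [this, hPosa]
      nlinarith
    have hcore := hs.duhamel_core σ h0s (le_of_lt hsa) hat htT hx hPa hPo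
    rw [hPosa] at hcore
    have hu0 : u a σ 0 = 0 := hs.boundary_zero hvpos (h0s.trans_lt hsa) (hat.trans htT)
    rw [hu0, mul_zero, zero_add] at hcore
    -- extend the integral from [a,t] to [s,t]
    have haIcc : a ∈ Set.Icc (0:ℝ) T := ⟨h0s.trans (le_of_lt hsa), hat.trans htT⟩
    have hintg : ∀ c d : ℝ, s ≤ c → c ≤ d → d ≤ t → IntervalIntegrable
        (fun r => Real.exp (-∫ q in r..t, lam P (u q) σ) * gbar P u σ r) volume c d := by
      intro c d h1 h2 h3
      apply ContinuousOn.intervalIntegrable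
      have hsub : Set.uIcc c d ⊆ Set.Icc s t := by
        rw [Set.uIcc_of_le h2]; exact Set.Icc_subset_Icc h1 h3
      refine ContinuousOn.mul ?_ ?_
      · exact (Real.continuous_exp.comp_continuousOn
          ((hs.tail_contOn σ h0s hst htT).neg)).mono hsub
      · exact (hs.contOn_gbar σ).mono fun r hr =>
          ⟨h0s.trans (hsub hr).1, ((hsub hr).2).trans htT⟩
    have hsplit := intervalIntegral.integral_add_adjacent_intervals
      (hintg s a le_rfl (le_of_lt hsa) hat) (hintg a t (le_of_lt hsa) hat le_rfl)
    have hfirst : 0 ≤ ∫ r in s..a, Real.exp (-∫ q in r..t, lam P (u q) σ) * gbar P u σ r := by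
      apply intervalIntegral.integral_nonneg (le_of_lt hsa)
      intro r hr
      have hrIcc : r ∈ Set.Icc (0:ℝ) T := ⟨h0s.trans hr.1, (hr.2.trans hat).trans htT⟩
      exact mul_nonneg (le_of_lt (Real.exp_pos _)) (hs.gbar_nonneg hrIcc σ)
    have hsecond : (0:ℝ) ≤ Real.exp (-∫ r in s..t, lam P (u r) σ) * hsup (u s) σ :=
      mul_nonneg (le_of_lt (Real.exp_pos _)) (hsup_nonneg (hs.bdd hsIcc σ))
    linarith

/-- The per-species Volterra inequality for the sup norms. -/
lemma Sol.hsup_duhamel (hs : Sol P T u) (σ : Fin M) {s t : ℝ} (h0s : 0 ≤ s) (hst : s ≤ t)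
    (htT : t ≤ T) :
    hsup (u t) σ ≤ Real.exp (-∫ r in s..t, lam P (u r) σ) * hsup (u s) σ
      + ∫ r in s..t, Real.exp (-∫ q in r..t, lam P (u q) σ) * gbar P u σ r := by
  apply hsup_le
  intro x hx
  have htIcc : t ∈ Set.Icc (0:ℝ) T := ⟨h0s.trans hst, htT⟩
  rw [abs_of_nonneg (hs.pos t htIcc σ x hx)]
  exact hs.duhamel σ h0s hst htT hx

end GBN

namespace GBN

variable {M : ℕ} {P : Params M} {T : ℝ} {u : ℝ → Fin M → ℝ → ℝ}

lemma exp_neg_quad {c : ℝ} (hc : 0 ≤ c) : Real.exp (-c) ≤ 1 - c + c^2 := by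
  have h1 : c + 1 ≤ Real.exp c := Real.add_one_le_exp c
  have h2 : 0 < Real.exp c := Real.exp_pos c
  have h3 : Real.exp (-c) = (Real.exp c)⁻¹ := Real.exp_neg c
  have h4 : (Real.exp c)⁻¹ * Real.exp c = 1 := inv_mul_cancel₀ (ne_of_gt h2)
  have h5 : 0 < (Real.exp c)⁻¹ := inv_pos.mpr h2
  rw [h3]
  nlinarith [sq_nonneg c, sq_nonneg (c - 1), mul_pos h5 h2]

lemma Sol.lam_bound (hs : Sol P T u) (hM : 0 < M) :
    ∃ Λ : ℝ, 0 ≤ Λ ∧ ∀ r ∈ Set.Icc (0:ℝ) T, ∀ σ, lam P (u r) σ ≤ Λ := by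
  have hgc : ContinuousOn (fun r => ∑ σ, lam P (u r) σ) (Set.Icc 0 T) :=
    continuousOn_finset_sum _ fun σ _ => hs.contOn_lam σ
  obtain ⟨C, hC⟩ := isCompact_Icc.exists_bound_of_continuousOn hgc
  refine ⟨max C 0, le_max_right _ _, fun r hr σ => ?_⟩
  have h1 : lam P (u r) σ ≤ ∑ τ, lam P (u r) τ :=
    Finset.single_le_sum (f := fun τ => lam P (u r) τ)
      (fun τ _ => hs.lam_nonneg hr τ) (Finset.mem_univ σ)
  have h2 := hC r hr
  rw [Real.norm_eq_abs] at h2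
  have h3 : ∑ τ, lam P (u r) τ ≤ C := (le_abs_self _).trans h2
  have := le_max_left C (0:ℝ)
  linarith

lemma Sol.hsup_bound (hs : Sol P T u) :
    ∃ H : ℝ, 0 ≤ H ∧ ∀ r ∈ Set.Icc (0:ℝ) T, ∀ σ, hsup (u r) σ ≤ H := by
  have hgc : ContinuousOn (fun r => ∑ σ, hsup (u r) σ) (Set.Icc 0 T) :=
    continuousOn_finset_sum _ fun σ _ => hs.contOn_hsup σ
  obtain ⟨C, hC⟩ := isCompact_Icc.exists_bound_of_continuousOn hgc
  refine ⟨max C 0, le_max_right _ _, fun r hr σ => ?_⟩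
  have h1 : hsup (u r) σ ≤ ∑ τ, hsup (u r) τ :=
    Finset.single_le_sum (f := fun τ => hsup (u r) τ)
      (fun τ _ => hsup_nonneg (hs.bdd hr τ)) (Finset.mem_univ σ)
  have h2 := hC r hr
  rw [Real.norm_eq_abs] at h2
  have h3 : ∑ τ, hsup (u r) τ ≤ C := (le_abs_self _).trans h2
  have := le_max_left C (0:ℝ)
  linarith

lemma gbar_colsum (r : ℝ) :
    ∑ σ, gbar P u σ r = ∑ n, lam P (u r) n * hsup (u r) n := by
  unfold gbar
  rw [Finset.sum_comm]
  refine Finset.sum_congr rfl fun n _ => ?_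
  rw [← Finset.sum_mul, colsum]

end GBN

namespace GBN

variable {M : ℕ} {P : Params M} {T : ℝ} {u : ℝ → Fin M → ℝ → ℝ}

set_option maxHeartbeats 1000000 in
lemma Sol.increment (hs : Sol P T u) {Λ H η : ℝ} (hΛ0 : 0 ≤ Λ) (hH0 : 0 ≤ H) (hη : 0 ≤ η)
    (hΛ : ∀ r ∈ Set.Icc (0:ℝ) T, ∀ σ, lam P (u r) σ ≤ Λ)
    (hH : ∀ r ∈ Set.Icc (0:ℝ) T, ∀ σ, hsup (u r) σ ≤ H)
    {z w : ℝ} (hz : z ∈ Set.Icc (0:ℝ) T) (hzw : z ≤ w) (hwT : w ≤ T)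
    (hnear : ∀ r ∈ Set.Icc z w, ∀ n : Fin M, |hsup (u r) n - hsup (u z) n| ≤ η) :
    (∑ σ, hsup (u w) σ) - (∑ σ, hsup (u z) σ) ≤
      ↑M * (Λ * η) * (w - z) + ↑M * (Λ^2 * H) * (w - z)^2 := by
  have h0z : 0 ≤ z := hz.1
  have hwIcc : w ∈ Set.Icc (0:ℝ) T := ⟨h0z.trans hzw, hwT⟩
  have hrIcc : ∀ r ∈ Set.Icc z w, r ∈ Set.Icc (0:ℝ) T :=
    fun r hr => ⟨h0z.trans hr.1, hr.2.trans hwT⟩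
  have hsubIcc : Set.uIcc z w ⊆ Set.Icc (0:ℝ) T := by
    rw [Set.uIcc_of_le hzw]; exact fun r hr => hrIcc r hr
  -- integrability facts
  have hlamint : ∀ n : Fin M, IntervalIntegrable (fun r => lam P (u r) n) volume z w :=
    fun n => hs.lam_intInt n hz hwIcc
  have hgbint : ∀ σ, IntervalIntegrable (gbar P u σ) volume z w := fun σ =>
    ContinuousOn.intervalIntegrable (((hs.contOn_gbar σ).mono hsubIcc))
  have htailint : ∀ σ, IntervalIntegrable
      (fun r => Real.exp (-∫ q in r..w, lam P (u q) σ) * gbar P u σ r) volume z w := by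
    intro σ
    apply ContinuousOn.intervalIntegrable
    rw [Set.uIcc_of_le hzw]
    refine ContinuousOn.mul ?_ ((hs.contOn_gbar σ).mono fun r hr => hrIcc r hr)
    exact Real.continuous_exp.comp_continuousOn ((hs.tail_contOn σ h0z hzw hwT).neg)
  have hlhint : ∀ n : Fin M, IntervalIntegrable
      (fun r => lam P (u r) n * hsup (u r) n) volume z w := fun n =>
    ContinuousOn.intervalIntegrable
      (((hs.contOn_lam n).mono hsubIcc).mul ((hs.contOn_hsup n).mono hsubIcc))
  have hlczint : ∀ n : Fin M, IntervalIntegrable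
      (fun r => lam P (u r) n * hsup (u z) n) volume z w := fun n =>
    ContinuousOn.intervalIntegrable (((hs.contOn_lam n).mono hsubIcc).mul continuousOn_const)
  -- abbreviations
  set I : Fin M → ℝ := fun σ => ∫ r in z..w, lam P (u r) σ with hIdef
  have hInn : ∀ σ, 0 ≤ I σ := fun σ =>
    intervalIntegral.integral_nonneg hzw fun r hr => hs.lam_nonneg (hrIcc r hr) σ
  have hIle : ∀ σ, I σ ≤ Λ * (w - z) := by
    intro σ
    have h1 := intervalIntegral.integral_mono_on hzw (hlamint σ)
      intervalIntegrable_const (fun r hr => hΛ r (hrIcc r hr) σ)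
    rw [intervalIntegral.integral_const, smul_eq_mul] at h1
    calc I σ ≤ (w - z) * Λ := h1
      _ = Λ * (w - z) := by ring
  -- step 1: Duhamel for each σ
  have step1 : ∀ σ, hsup (u w) σ ≤ Real.exp (-I σ) * hsup (u z) σ
      + ∫ r in z..w, Real.exp (-∫ q in r..w, lam P (u q) σ) * gbar P u σ r :=
    fun σ => hs.hsup_duhamel σ h0z hzw hwT
  -- step 2: quadratic bound for the exponential
  have step2 : ∀ σ, Real.exp (-I σ) * hsup (u z) σ ≤
      (1 - I σ + (I σ)^2) * hsup (u z) σ := fun σ =>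
    mul_le_mul_of_nonneg_right (exp_neg_quad (hInn σ)) (hsup_nonneg (hs.bdd hz σ))
  -- step 3: drop the exponential in the integral term
  have step3 : ∀ σ, (∫ r in z..w, Real.exp (-∫ q in r..w, lam P (u q) σ) * gbar P u σ r)
      ≤ ∫ r in z..w, gbar P u σ r := by
    intro σ
    apply intervalIntegral.integral_mono_on hzw (htailint σ) (hgbint σ)
    intro r hr
    have e1 : 0 ≤ ∫ q in r..w, lam P (u q) σ :=
      intervalIntegral.integral_nonneg hr.2
        (fun q hq => hs.lam_nonneg (hrIcc q ⟨hr.1.trans hq.1, hq.2⟩) σ)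
    have e2 : Real.exp (-∫ q in r..w, lam P (u q) σ) ≤ 1 :=
      Real.exp_le_one_iff.mpr (neg_nonpos.mpr e1)
    exact mul_le_of_le_one_left (hs.gbar_nonneg (hrIcc r hr) σ) e2
  -- step 4: column sums
  have step4 : (∑ σ, ∫ r in z..w, gbar P u σ r)
      = ∫ r in z..w, ∑ n, lam P (u r) n * hsup (u r) n := by
    rw [← intervalIntegral.integral_finset_sum (fun σ _ => hgbint σ)]
    apply intervalIntegral.integral_congr
    intro r _
    show (∑ σ, gbar P u σ r) = ∑ n, lam P (u r) n * hsup (u r) n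
    exact gbar_colsum r
  -- step 5: the I σ terms as integrals
  have step5 : (∑ σ, I σ * hsup (u z) σ)
      = ∫ r in z..w, ∑ n, lam P (u r) n * hsup (u z) n := by
    calc (∑ σ, I σ * hsup (u z) σ)
        = ∑ σ, ∫ r in z..w, lam P (u r) σ * hsup (u z) σ :=
          Finset.sum_congr rfl fun σ _ => (intervalIntegral.integral_mul_const _ _).symm
      _ = ∫ r in z..w, ∑ n, lam P (u r) n * hsup (u z) n :=
          (intervalIntegral.integral_finset_sum (fun n _ => hlczint n)).symm
  -- step 6: the difference integral
  have step6 : (∫ r in z..w, ∑ n, lam P (u r) n * hsup (u r) n)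
      - (∫ r in z..w, ∑ n, lam P (u r) n * hsup (u z) n)
      = ∫ r in z..w, ∑ n, lam P (u r) n * (hsup (u r) n - hsup (u z) n) := by
    have hs1 : IntervalIntegrable (fun r => ∑ n, lam P (u r) n * hsup (u r) n) volume z w :=
      ContinuousOn.intervalIntegrable (continuousOn_finset_sum _ fun n _ =>
        ((hs.contOn_lam n).mono hsubIcc).mul ((hs.contOn_hsup n).mono hsubIcc))
    have hs2 : IntervalIntegrable (fun r => ∑ n, lam P (u r) n * hsup (u z) n) volume z w :=
      ContinuousOn.intervalIntegrable (continuousOn_finset_sum _ fun n _ =>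
        ((hs.contOn_lam n).mono hsubIcc).mul continuousOn_const)
    rw [← intervalIntegral.integral_sub hs1 hs2]
    apply intervalIntegral.integral_congr
    intro r _
    show (∑ n, lam P (u r) n * hsup (u r) n) - (∑ n, lam P (u r) n * hsup (u z) n)
        = ∑ n, lam P (u r) n * (hsup (u r) n - hsup (u z) n)
    rw [← Finset.sum_sub_distrib]
    exact Finset.sum_congr rfl fun n _ => by ring
  -- step 7: bound the difference integral
  have step7 : (∫ r in z..w, ∑ n, lam P (u r) n * (hsup (u r) n - hsup (u z) n))
      ≤ ↑M * (Λ * η) * (w - z) := by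
    have hDint : IntervalIntegrable
        (fun r => ∑ n, lam P (u r) n * (hsup (u r) n - hsup (u z) n)) volume z w :=
      ContinuousOn.intervalIntegrable (continuousOn_finset_sum _ fun n _ =>
        ((hs.contOn_lam n).mono hsubIcc).mul
          (((hs.contOn_hsup n).mono hsubIcc).sub continuousOn_const))
    have hpt : ∀ r ∈ Set.Icc z w,
        (∑ n, lam P (u r) n * (hsup (u r) n - hsup (u z) n)) ≤ ↑M * (Λ * η) := by
      intro r hr
      have hterm : ∀ n : Fin M, lam P (u r) n * (hsup (u r) n - hsup (u z) n) ≤ Λ * η := by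
        intro n
        have e1 : hsup (u r) n - hsup (u z) n ≤ η :=
          (le_abs_self _).trans (hnear r hr n)
        have e2 : 0 ≤ lam P (u r) n := hs.lam_nonneg (hrIcc r hr) n
        have e3 : lam P (u r) n ≤ Λ := hΛ r (hrIcc r hr) n
        calc lam P (u r) n * (hsup (u r) n - hsup (u z) n) ≤ lam P (u r) n * η :=
              mul_le_mul_of_nonneg_left e1 e2
          _ ≤ Λ * η := mul_le_mul_of_nonneg_right e3 hη
      calc (∑ n, lam P (u r) n * (hsup (u r) n - hsup (u z) n)) ≤ ∑ _n : Fin M, Λ * η :=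
            Finset.sum_le_sum fun n _ => hterm n
        _ = ↑M * (Λ * η) := by
            rw [Finset.sum_const, Finset.card_univ, Fintype.card_fin, nsmul_eq_mul]
    have h1 := intervalIntegral.integral_mono_on (f := fun r =>
        ∑ n, lam P (u r) n * (hsup (u r) n - hsup (u z) n))
      (g := fun _ => ↑M * (Λ * η)) hzw hDint intervalIntegrable_const hpt
    rw [intervalIntegral.integral_const, smul_eq_mul] at h1
    calc _ ≤ (w - z) * (↑M * (Λ * η)) := h1
      _ = ↑M * (Λ * η) * (w - z) := by ring
  -- step 8: the quadratic terms
  have step8 : (∑ σ, (I σ)^2 * hsup (u z) σ) ≤ ↑M * (Λ^2 * H) * (w - z)^2 := by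
    have hterm : ∀ σ, (I σ)^2 * hsup (u z) σ ≤ Λ^2 * H * (w - z)^2 := by
      intro σ
      have e1 := hIle σ
      have e2 := hInn σ
      have e3 : hsup (u z) σ ≤ H := hH z hz σ
      have e4 : 0 ≤ hsup (u z) σ := hsup_nonneg (hs.bdd hz σ)
      have e5 : 0 ≤ w - z := by linarith
      have e6 : I σ * I σ ≤ (Λ * (w - z)) * (Λ * (w - z)) :=
        mul_le_mul e1 e1 e2 (mul_nonneg hΛ0 e5)
      calc (I σ)^2 * hsup (u z) σ = (I σ * I σ) * hsup (u z) σ := by ring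
        _ ≤ ((Λ * (w - z)) * (Λ * (w - z))) * H :=
            mul_le_mul e6 e3 e4
              (mul_nonneg (mul_nonneg hΛ0 e5) (mul_nonneg hΛ0 e5))
        _ = Λ^2 * H * (w - z)^2 := by ring
    calc (∑ σ, (I σ)^2 * hsup (u z) σ) ≤ ∑ _σ : Fin M, Λ^2 * H * (w - z)^2 :=
          Finset.sum_le_sum fun σ _ => hterm σ
      _ = ↑M * (Λ^2 * H) * (w - z)^2 := by
          rw [Finset.sum_const, Finset.card_univ, Fintype.card_fin, nsmul_eq_mul]; ring
  -- combine everything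
  have comb1 : (∑ σ, hsup (u w) σ) ≤
      (∑ σ, (1 - I σ + (I σ)^2) * hsup (u z) σ) + ∑ σ, ∫ r in z..w, gbar P u σ r := by
    rw [← Finset.sum_add_distrib]
    refine Finset.sum_le_sum fun σ _ => ?_
    exact (step1 σ).trans (add_le_add (step2 σ) (step3 σ))
  have comb2 : (∑ σ, hsup (u z) σ) - (∑ σ, I σ * hsup (u z) σ)
        + (∑ σ, (I σ)^2 * hsup (u z) σ)
      = ∑ σ, (1 - I σ + (I σ)^2) * hsup (u z) σ := by
    rw [← Finset.sum_sub_distrib, ← Finset.sum_add_distrib]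
    exact Finset.sum_congr rfl fun σ _ => by ring
  rw [← comb2, step4, step5] at comb1
  linarith [step7, step8, step6]

end GBN

namespace GBN

variable {M : ℕ} {P : Params M} {T : ℝ} {u : ℝ → Fin M → ℝ → ℝ}

set_option maxHeartbeats 1000000 in
lemma Sol.normLinf_mono (hs : Sol P T u) {t : ℝ} (ht : t ∈ Set.Icc (0:ℝ) T) :
    normLinf (u t) ≤ normLinf (u 0) := by
  obtain ⟨Λ, hΛ0, hΛ⟩ := hs.lam_bound P.hM
  obtain ⟨H, hH0, hH⟩ := hs.hsup_bound
  rw [normLinf_eq_sum_hsup, normLinf_eq_sum_hsup]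
  set S : ℝ → ℝ := fun r => ∑ σ, hsup (u r) σ with hSdef
  have hScont : ContinuousOn S (Set.Icc 0 T) :=
    continuousOn_finset_sum _ fun σ _ => hs.contOn_hsup σ
  have key : ∀ ε > (0:ℝ), S t ≤ S 0 + ε + ε * t := by
    intro ε hε
    have hB : ∀ y : ℝ, HasDerivAt (fun y => S 0 + ε + ε * y) ε y := by
      intro y
      have h1 : HasDerivAt (fun y : ℝ => ε * y) ε y := by
        simpa using (hasDerivAt_id y).const_mul ε
      exact h1.const_add (S 0 + ε)
    have hf' : ∀ z ∈ Set.Ico (0:ℝ) T, ∀ ρ, ε/2 < ρ →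
        ∃ᶠ w in nhdsWithin z (Set.Ioi z), slope S z w < ρ := by
      intro z hz ρ hρ
      have hρ0 : 0 < ρ := lt_of_le_of_lt (by linarith) hρ
      have hzIcc : z ∈ Set.Icc (0:ℝ) T := ⟨hz.1, hz.2.le⟩
      set c1 : ℝ := (M:ℝ) * Λ with hc1def
      set c2 : ℝ := (M:ℝ) * (Λ^2 * H) with hc2def
      have hc1 : 0 ≤ c1 := mul_nonneg (Nat.cast_nonneg _) hΛ0
      have hc2 : 0 ≤ c2 := mul_nonneg (Nat.cast_nonneg _)
        (mul_nonneg (sq_nonneg _) hH0)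
      set η : ℝ := ρ / (4 * (c1 + 1)) with hηdef
      have h41 : (0:ℝ) < 4 * (c1 + 1) := by linarith
      have hη0 : 0 < η := div_pos hρ0 h41
      obtain ⟨δ₁, hδ₁, hd⟩ := hs.contX z hzIcc η hη0
      set δ' : ℝ := min (T - z) (min (δ₁/2) (ρ / (4 * (c2 + 1)))) with hδ'def
      have h42 : (0:ℝ) < 4 * (c2 + 1) := by linarith
      have hδ'0 : 0 < δ' := by
        apply lt_min (by linarith [hz.2])
        exact lt_min (by linarith) (div_pos hρ0 h42)
      refine Filter.Eventually.frequently ?_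
      refine Filter.eventually_of_mem
        (Ioc_mem_nhdsGT_of_mem (show z ∈ Set.Ico z (z + δ') from ⟨le_rfl, by linarith⟩)) ?_
      intro w hw
      have hzw : z < w := hw.1
      have hwz' : w - z ≤ δ' := by linarith [hw.2]
      have hwT : w ≤ T := by
        have := min_le_left (T - z) (min (δ₁/2) (ρ / (4 * (c2 + 1))))
        linarith [hw.2]
      have hwIcc : w ∈ Set.Icc (0:ℝ) T := ⟨hz.1.trans hzw.le, hwT⟩
      have hδ'δ₁ : δ' ≤ δ₁/2 :=
        le_trans (min_le_right _ _) (min_le_left _ _)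
      have hδ'ρ : δ' ≤ ρ / (4 * (c2 + 1)) :=
        le_trans (min_le_right _ _) (min_le_right _ _)
      have hnear : ∀ r ∈ Set.Icc z w, ∀ n : Fin M, |hsup (u r) n - hsup (u z) n| ≤ η := by
        intro r hr n
        have hrIcc : r ∈ Set.Icc (0:ℝ) T := ⟨hz.1.trans hr.1, hr.2.trans hwT⟩
        have h1 : |r - z| < δ₁ := by
          rw [abs_of_nonneg (by linarith [hr.1])]
          linarith [hr.2]
        exact le_of_lt (lt_of_le_of_lt (hs.hsup_diff hrIcc hzIcc n) (hd r hrIcc h1))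
      have hinc := hs.increment hΛ0 hH0 hη0.le hΛ hH hzIcc hzw.le hwT hnear
      -- turn into a slope bound
      have hb1 : c1 * η ≤ ρ/4 := by
        have hdd : η * (4 * (c1 + 1)) = ρ := div_mul_cancel₀ _ (ne_of_gt h41)
        nlinarith [hη0.le]
      have hb2 : c2 * (w - z) ≤ ρ/4 := by
        have hdd : (ρ / (4 * (c2 + 1))) * (4 * (c2 + 1)) = ρ :=
          div_mul_cancel₀ _ (ne_of_gt h42)
        have h1 : c2 * (w - z) ≤ c2 * (ρ / (4 * (c2 + 1))) :=
          mul_le_mul_of_nonneg_left (le_trans hwz' hδ'ρ) hc2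
        nlinarith [div_nonneg hρ0.le h42.le]
      rw [slope_def_field, div_lt_iff₀ (by linarith : (0:ℝ) < w - z)]
      have hfin : S w - S z ≤ (ρ/4) * (w - z) + (ρ/4) * (w - z) := by
        have e1 : (M:ℝ) * (Λ * η) * (w - z) ≤ (ρ/4) * (w - z) := by
          apply mul_le_mul_of_nonneg_right _ (by linarith : (0:ℝ) ≤ w - z)
          calc (M:ℝ) * (Λ * η) = c1 * η := by rw [hc1def]; ring
            _ ≤ ρ/4 := hb1
        have e2 : (M:ℝ) * (Λ^2 * H) * (w - z)^2 ≤ (ρ/4) * (w - z) := by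
          calc (M:ℝ) * (Λ^2 * H) * (w - z)^2 = (c2 * (w - z)) * (w - z) := by
                rw [hc2def]; ring
            _ ≤ (ρ/4) * (w - z) :=
                mul_le_mul_of_nonneg_right hb2 (by linarith : (0:ℝ) ≤ w - z)
        calc S w - S z ≤ (M:ℝ) * (Λ * η) * (w - z) + (M:ℝ) * (Λ^2 * H) * (w - z)^2 := hinc
          _ ≤ _ := add_le_add e1 e2
      nlinarith [hfin]
    have hfence := image_le_of_liminf_slope_right_lt_deriv_boundary
      (f := S) (f' := fun _ => ε/2) (a := 0) (b := T) hScont hf'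
      (B := fun y => S 0 + ε + ε * y) (B' := fun _ => ε)
      (by simp only [mul_zero, add_zero]; linarith) hB
      (fun x _ _ => by linarith)
    have := hfence ht
    simpa using this
  by_contra hcon
  push_neg at hcon
  have h1t : (0:ℝ) < 1 + t := by linarith [ht.1]
  set ε : ℝ := (S t - S 0)/(2*(1+t)) with hεdef
  have hε : 0 < ε := div_pos (by linarith) (by linarith)
  have hk := key ε hε
  have h2 : ε * (1 + t) = (S t - S 0)/2 := by
    rw [hεdef]; field_simp
  nlinarith [hk]

end GBN


namespace GBN

/-- L∞ growth estimate (Lemma B.4, eq. (B.2)): there is a constant C > 0 depending only on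
the model parameters such that every positive mild solution on [0,T] with positive weight
denominators satisfies ‖f(t)‖_∞ ≤ ‖f(0)‖_∞ exp(C ∫₀ᵗ Φ(τ) dτ), where
Φ(τ) = β + max_{1≤l≤M⁻} Σ_k W^(l)_k(f(τ)). -/
theorem LinfinityBound (M : ℕ) (P : Params M) :
    ∃ C > (0:ℝ), ∀ T : ℝ, 0 ≤ T → ∀ u : ℝ → Fin M → ℝ → ℝ,
      MildSolution P T u → PositiveOn T u →
      (∀ t ∈ Set.Icc (0:ℝ) T,
        (∀ l ∈ bSet P, 0 < ∑ n : Fin M, P.wb l n * Fc (u t) n) ∧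
          0 < ∑ n : Fin M, P.wint n * Fc (u t) n) →
      ∀ t ∈ Set.Icc (0:ℝ) T,
        normLinf (u t) ≤ normLinf (u 0) *
          Real.exp (C * ∫ τ in (0:ℝ)..t,
            (P.beta + sSup {y : ℝ | ∃ l ∈ bSet P, y = ∑ k : Fin M, Wgt (P.wb l) (u τ) k})) := by
  refine ⟨1, one_pos, ?_⟩
  intro T hT u hms hpos hden t ht
  have hsol : Sol P T u := ⟨hT, hms.1, hms.2.1, hms.2.2, hpos, hden⟩
  have h0Icc : (0:ℝ) ∈ Set.Icc (0:ℝ) T := ⟨le_rfl, hT⟩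
  have hmono : normLinf (u t) ≤ normLinf (u 0) := hsol.normLinf_mono ht
  have hnn0 : 0 ≤ normLinf (u 0) :=
    Finset.sum_nonneg fun σ _ => hsup_nonneg (hsol.bdd h0Icc σ)
  have hint : 0 ≤ ∫ τ in (0:ℝ)..t,
      (P.beta + sSup {y : ℝ | ∃ l ∈ bSet P, y = ∑ k : Fin M, Wgt (P.wb l) (u τ) k}) := by
    apply intervalIntegral.integral_nonneg ht.1
    intro τ hτ
    have hτIcc : τ ∈ Set.Icc (0:ℝ) T := ⟨hτ.1, hτ.2.trans ht.2⟩
    have hsup0 : 0 ≤ sSup {y : ℝ | ∃ l ∈ bSet P, y = ∑ k : Fin M, Wgt (P.wb l) (u τ) k} := by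
      rcases Finset.eq_empty_or_nonempty (bSet P) with hb | ⟨l₀, hl₀⟩
      · have : {y : ℝ | ∃ l ∈ bSet P, y = ∑ k : Fin M, Wgt (P.wb l) (u τ) k} = ∅ := by
          rw [Set.eq_empty_iff_forall_notMem]
          rintro y ⟨l, hl, _⟩
          rw [hb] at hl
          exact absurd hl (Finset.notMem_empty l)
        rw [this, Real.sSup_empty]
      · have hmem : (∑ k : Fin M, Wgt (P.wb l₀) (u τ) k) ∈
            {y : ℝ | ∃ l ∈ bSet P, y = ∑ k : Fin M, Wgt (P.wb l) (u τ) k} := ⟨l₀, hl₀, rfl⟩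
        have hbdd : BddAbove {y : ℝ | ∃ l ∈ bSet P, y = ∑ k : Fin M, Wgt (P.wb l) (u τ) k} := by
          have hset : {y : ℝ | ∃ l ∈ bSet P, y = ∑ k : Fin M, Wgt (P.wb l) (u τ) k}
              = (fun l => ∑ k : Fin M, Wgt (P.wb l) (u τ) k) '' (bSet P : Set (Fin M)) := by
            ext y
            constructor
            · rintro ⟨l, hl, rfl⟩; exact ⟨l, hl, rfl⟩
            · rintro ⟨l, hl, rfl⟩; exact ⟨l, hl, rfl⟩
          rw [hset]
          exact (((bSet P).finite_toSet).image _).bddAbove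
        have h0 : 0 ≤ ∑ k : Fin M, Wgt (P.wb l₀) (u τ) k :=
          Finset.sum_nonneg fun k _ => hsol.Wgt_nonneg hτIcc hl₀ k
        exact h0.trans (le_csSup hbdd hmem)
    linarith [P.hbeta]
  have hexp : (1:ℝ) ≤ Real.exp (1 * ∫ τ in (0:ℝ)..t,
      (P.beta + sSup {y : ℝ | ∃ l ∈ bSet P, y = ∑ k : Fin M, Wgt (P.wb l) (u τ) k})) := by
    rw [one_mul]
    exact Real.one_le_exp hint
  calc normLinf (u t) ≤ normLinf (u 0) := hmono
    _ = normLinf (u 0) * 1 := by ring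
    _ ≤ _ := mul_le_mul_of_nonneg_left hexp hnn0


end GBN
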